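/- Every order ideal in the Gale order on $k$-subsets of $[n]$ has the quasi-exchange property. -/

import Mathlib

/-- Increasing enumeration of a finite set of naturals. -/
def sortedL (x : Finset ℕ) : List ℕ := x.sort (· ≤ ·)

/-- The Gale (Bruhat) order on finite subsets of ℕ: componentwise comparison of
the increasing enumerations. -/
def GaleLE (x y : Finset ℕ) : Prop :=
  ∀ i (hx : i < (sortedL x).length) (hy : i < (sortedL y).length),
    (sortedL x).get ⟨i, hx⟩ ≤ (sortedL y).get ⟨i, hy⟩

def GaleLT (x y : Finset ℕ) : Prop := GaleLE x y ∧ x ≠ y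

/-- The quasi-exchange property. -/
def QuasiExchange (X : Set (Finset ℕ)) : Prop :=
  ∀ x ∈ X, ∀ y ∈ X, ∀ i ∈ x \ y, (y \ x).Nonempty → (∀ m ∈ y \ x, m < i) →
    ∃ j ∈ y \ x, (x \ {i}) ∪ {j} ∈ X

lemma sorted_get_le_iff {l : List ℕ} (hl : l.Pairwise (· ≤ ·)) {m : ℕ} (hm : m < l.length)
    (t : ℕ) : l.get ⟨m, hm⟩ ≤ t ↔ m < l.countP (fun a => decide (a ≤ t)) := by
  constructor
  · intro h
    have hsplit : l = l.take (m + 1) ++ l.drop (m + 1) := (List.take_append_drop _ l).symm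
    have htakelen : (l.take (m + 1)).length = m + 1 := by
      simp only [List.length_take]; omega
    have hall : ∀ a ∈ l.take (m + 1), a ≤ t := by
      intro a ha
      obtain ⟨idx, hidx⟩ := List.mem_iff_get.mp ha
      have hidx' : (idx : ℕ) < m + 1 := by
        have := idx.isLt
        omega
      have hidxlt : (idx : ℕ) < l.length := by omega
      have hget : (l.take (m + 1)).get idx = l.get ⟨idx, hidxlt⟩ := by
        simp [List.get_eq_getElem, List.getElem_take]
      rw [hget] at hidx
      have hle : l.get ⟨idx, hidxlt⟩ ≤ l.get ⟨m, hm⟩ :=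
        hl.rel_get_of_le (by simp [Fin.le_def]; omega)
      subst hidx
      exact le_trans hle h
    have htake : (l.take (m + 1)).countP (fun a => decide (a ≤ t)) = m + 1 := by
      rw [List.countP_eq_length_filter, List.filter_eq_self.mpr (by
        intro a ha; simpa using hall a ha)]
      exact htakelen
    calc m < m + 1 := Nat.lt_succ_self m
      _ = (l.take (m + 1)).countP (fun a => decide (a ≤ t)) := htake.symm
      _ ≤ l.countP (fun a => decide (a ≤ t)) := by
          conv_rhs => rw [hsplit]
          rw [List.countP_append]; omega
  · intro h
    by_contra hc
    push_neg at hc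
    have hdrop : (l.drop m).countP (fun a => decide (a ≤ t)) = 0 := by
      rw [List.countP_eq_zero]
      intro a ha
      obtain ⟨idx, hidx⟩ := List.mem_iff_get.mp ha
      have hidxlt : m + (idx : ℕ) < l.length := by
        have h1 := idx.isLt
        have h2 : (l.drop m).length = l.length - m := List.length_drop
        omega
      have hget : (l.drop m).get idx = l.get ⟨m + idx, hidxlt⟩ := by
        simp [List.get_eq_getElem, List.getElem_drop]
      rw [hget] at hidx
      have hle : l.get ⟨m, hm⟩ ≤ l.get ⟨m + idx, hidxlt⟩ :=
        hl.rel_get_of_le (by simp [Fin.le_def])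
      subst hidx
      simp only [decide_eq_true_eq]
      omega
    have htake : (l.take m).countP (fun a => decide (a ≤ t)) ≤ m := by
      calc (l.take m).countP (fun a => decide (a ≤ t)) ≤ (l.take m).length :=
            List.countP_le_length
        _ ≤ m := by simp
    have hsplit : l = l.take m ++ l.drop m := (List.take_append_drop _ l).symm
    rw [hsplit, List.countP_append, hdrop] at h
    omega

lemma countP_sortedL (s : Finset ℕ) (t : ℕ) :
    (sortedL s).countP (fun a => decide (a ≤ t)) = (s.filter (· ≤ t)).card := by
  have hperm : (sortedL s).Perm s.toList := Finset.sort_perm_toList s _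
  rw [hperm.countP_eq]
  have h1 : Multiset.countP (· ≤ t) (↑s.toList) = s.toList.countP (fun a => decide (a ≤ t)) :=
    Multiset.coe_countP _ _
  rw [← h1, Finset.coe_toList, Multiset.countP_eq_card_filter]
  rfl

lemma filter_card_le {A : Finset ℕ} {i j : ℕ} (hiA : i ∈ A) (hjA : j ∉ A) (hji : j < i)
    (t : ℕ) : (A.filter (· ≤ t)).card ≤ (((A \ {i}) ∪ {j}).filter (· ≤ t)).card := by
  have hB : (A \ {i}) ∪ {j} = insert j (A.erase i) := by
    rw [Finset.sdiff_singleton_eq_erase]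
    ext a; simp [or_comm]
  rw [hB, Finset.filter_insert, Finset.filter_erase]
  by_cases hit : i ≤ t
  · have hjt : j ≤ t := le_of_lt (lt_of_lt_of_le hji hit)
    rw [if_pos hjt]
    have hiF : i ∈ A.filter (· ≤ t) := Finset.mem_filter.mpr ⟨hiA, hit⟩
    have hjF : j ∉ (A.filter (· ≤ t)).erase i := fun h =>
      hjA (Finset.mem_filter.mp (Finset.mem_of_mem_erase h)).1
    rw [Finset.card_insert_of_notMem hjF, Finset.card_erase_of_mem hiF]
    have : 1 ≤ (A.filter (· ≤ t)).card := Finset.card_pos.mpr ⟨i, hiF⟩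
    omega
  · have hiF : i ∉ A.filter (· ≤ t) := fun h => hit (Finset.mem_filter.mp h).2
    rw [Finset.erase_eq_of_notMem hiF]
    split_ifs with hjt
    · exact Finset.card_le_card (Finset.subset_insert _ _)
    · exact le_refl _

lemma gale_swap {A : Finset ℕ} {i j : ℕ} (hiA : i ∈ A) (hjA : j ∉ A) (hji : j < i) :
    GaleLE ((A \ {i}) ∪ {j}) A := by
  intro m hx hy
  set B := (A \ {i}) ∪ {j} with hBdef
  set t := (sortedL A).get ⟨m, hy⟩ with ht
  have hsortA : (sortedL A).Pairwise (· ≤ ·) := Finset.pairwise_sort A _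
  have hsortB : (sortedL B).Pairwise (· ≤ ·) := Finset.pairwise_sort B _
  have h1 : m < (sortedL A).countP (fun a => decide (a ≤ t)) :=
    (sorted_get_le_iff hsortA hy t).mp (le_refl _)
  rw [countP_sortedL] at h1
  have h2 : m < (sortedL B).countP (fun a => decide (a ≤ t)) := by
    rw [countP_sortedL]
    exact lt_of_lt_of_le h1 (filter_card_le hiA hjA hji t)
  exact (sorted_get_le_iff hsortB hx t).mpr h2

/-- Every order ideal in the Gale order on `k`-subsets of `[n]` has the
quasi-exchange property. -/
theorem ideal_quasiExchange
    (n k : ℕ) (X : Set (Finset ℕ))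
    (hX : ∀ x ∈ X, x ⊆ Finset.Icc 1 n ∧ x.card = k)
    (hideal : ∀ y ∈ X, ∀ x : Finset ℕ, x ⊆ Finset.Icc 1 n → x.card = k →
      GaleLE x y → x ∈ X) :
    QuasiExchange X := by
  intro x hx y hy i hi hne hlt
  obtain ⟨j, hj⟩ := hne
  refine ⟨j, hj, ?_⟩
  have hix : i ∈ x := (Finset.mem_sdiff.mp hi).1
  have hjx : j ∉ x := (Finset.mem_sdiff.mp hj).2
  have hjy : j ∈ y := (Finset.mem_sdiff.mp hj).1
  have hji : j < i := hlt j hj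
  obtain ⟨hxsub, hxcard⟩ := hX x hx
  obtain ⟨hysub, _⟩ := hX y hy
  have heq : (x \ {i}) ∪ {j} = insert j (x.erase i) := by
    rw [Finset.sdiff_singleton_eq_erase]
    ext a; simp [or_comm]
  refine hideal x hx _ ?_ ?_ (gale_swap hix hjx hji)
  · rw [heq]
    intro a ha
    rcases Finset.mem_insert.mp ha with rfl | h
    · exact hysub hjy
    · exact hxsub (Finset.mem_of_mem_erase h)
  · rw [heq, Finset.card_insert_of_notMem (fun h => hjx (Finset.mem_of_mem_erase h)),
      Finset.card_erase_of_mem hix]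
    have : 1 ≤ x.card := Finset.card_pos.mpr ⟨i, hix⟩
    omega
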